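/- For the exact solution U(t) = e^{tΩ}U₀ of the drag ODE, the weighted total momentum M_g(t) + Σᵢ M_{d,i}(t) is constant in t and equals M_g(0) + Σᵢ M_{d,i}(0). -/

import Mathlib

open Matrix BigOperators

noncomputable def dragMatrix (N : ℕ) (ε α : Fin N → ℝ) :
    Matrix (Fin (N + 1)) (Fin (N + 1)) ℝ :=
  Matrix.of fun i j =>
    if hi : i = 0 then
      if hj : j = 0 then -∑ k, ε k * α k
      else α (j.pred hj)
    else
      if hj : j = 0 then ε (i.pred hi) * α (i.pred hi)
      else if i = j then -α (i.pred hi) else 0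

attribute [local instance] Matrix.linftyOpNormedRing Matrix.linftyOpNormedAlgebra

/-- `M ↦ x ᵥ* M` as a linear map. -/
noncomputable def vecMulLeft {n : ℕ} (x : Fin n → ℝ) :
    Matrix (Fin n) (Fin n) ℝ →ₗ[ℝ] (Fin n → ℝ) where
  toFun M := x ᵥ* M
  map_add' A B := Matrix.vecMul_add A B x
  map_smul' c A := by
    ext j
    simp [Matrix.vecMul, dotProduct, Finset.mul_sum, mul_left_comm]

lemma vecMul_exp_of_vecMul_eq_zero {n : ℕ} (B : Matrix (Fin n) (Fin n) ℝ)
    (x : Fin n → ℝ) (h : x ᵥ* B = 0) : x ᵥ* NormedSpace.exp B = x := by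
  have hsum : Summable fun k : ℕ => ((Nat.factorial k : ℝ))⁻¹ • B ^ k :=
    NormedSpace.expSeries_summable' B
  have hcont : Continuous (vecMulLeft x) :=
    LinearMap.continuous_of_finiteDimensional _
  have : x ᵥ* NormedSpace.exp B
      = ∑' k : ℕ, vecMulLeft x (((Nat.factorial k : ℝ))⁻¹ • B ^ k) := by
    rw [NormedSpace.exp_eq_tsum (𝕂 := ℝ)]
    exact (hsum.hasSum.map (vecMulLeft x) hcont).tsum_eq.symm
  rw [this]
  rw [tsum_eq_single 0]
  · simp [vecMulLeft, Matrix.vecMul_one]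
  · intro k hk
    obtain ⟨m, rfl⟩ := Nat.exists_eq_succ_of_ne_zero hk
    have hpow : x ᵥ* B ^ (m + 1) = 0 := by
      rw [pow_succ', ← Matrix.vecMul_vecMul, h, Matrix.zero_vecMul]
    simp [vecMulLeft, _root_.map_smul, hpow]

/-- For the exact solution `U(t) = e^{tΩ}U₀`, the total momentum `M_g + Σᵢ M_{d,i}`
is conserved in time. -/
theorem stmt_6 (N : ℕ) (hN : 1 ≤ N) (ε α : Fin N → ℝ)
    (hε : ∀ i, 0 < ε i) (hα : ∀ i, 0 < α i) (U₀ : Fin (N + 1) → ℝ) :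
    ∀ t : ℝ, ∑ i, (NormedSpace.exp (t • dragMatrix N ε α)).mulVec U₀ i = ∑ i, U₀ i := by
  intro t
  set Ω := dragMatrix N ε α with hΩ
  have hones : (fun _ => (1 : ℝ)) ᵥ* Ω = 0 := by
    ext j
    simp only [Matrix.vecMul, dotProduct, one_mul, Pi.zero_apply]
    rw [Fin.sum_univ_succ]
    rcases eq_or_ne j 0 with rfl | hj
    · simp [hΩ, dragMatrix, Fin.succ_ne_zero, Fin.pred_succ]
    · obtain ⟨k, rfl⟩ := Fin.exists_succ_eq_of_ne_zero hj
      simp [hΩ, dragMatrix, Fin.succ_ne_zero, Fin.pred_succ, Fin.succ_inj,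
        Finset.sum_ite_eq']
  have hzero : (fun _ => (1 : ℝ)) ᵥ* (t • Ω) = 0 := by
    show vecMulLeft (fun _ => (1 : ℝ)) (t • Ω) = 0
    rw [_root_.map_smul]
    show t • ((fun _ => (1 : ℝ)) ᵥ* Ω) = 0
    rw [hones, smul_zero]
  have hfix : (fun _ => (1 : ℝ)) ᵥ* NormedSpace.exp (t • Ω) = fun _ => (1 : ℝ) :=
    vecMul_exp_of_vecMul_eq_zero _ _ hzero
  calc ∑ i, (NormedSpace.exp (t • Ω)).mulVec U₀ i
      = ((fun _ => (1:ℝ)) ᵥ* NormedSpace.exp (t • Ω)) ⬝ᵥ U₀ := by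
        simp only [Matrix.mulVec, Matrix.vecMul, dotProduct, one_mul,
          Finset.sum_mul, Finset.mul_sum]
        rw [Finset.sum_comm]
    _ = ∑ i, U₀ i := by rw [hfix]; simp [dotProduct]
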